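/- With C₁, C₂, Φ and Δ* as above, define δ₁ = Δ₁ on C₁ with δ₁Φ = (id ⊗ Φ)Δ₁ on C₂, and δ̂₁ = Δ₁ on C₁ with δ̂₁Φ = (Φ ⊗ id)Δ₁ on C₂. Then (D, Δ*, δ₁, δ̂₁) is a pre-dendriform coalgebra: Δ* is coassociative, (Δ* ⊗ id)δ₁ = (id ⊗ δ₁)δ₁, (id ⊗ Δ*)δ̂₁ = (δ̂₁ ⊗ id)δ̂₁, and (id ⊗ δ̂₁)δ₁ = (δ₁ ⊗ id)δ̂₁. -/

import Mathlib

open TensorProduct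

/-- `(f ⊗ id) ∘ g`, rebracketed via the associator. -/
noncomputable def cL {k M : Type*} [Field k] [AddCommGroup M] [Module k M]
    (f g : M →ₗ[k] M ⊗[k] M) : M →ₗ[k] M ⊗[k] (M ⊗[k] M) :=
  (TensorProduct.assoc k M M M).toLinearMap ∘ₗ (TensorProduct.map f LinearMap.id) ∘ₗ g

/-- `(id ⊗ f) ∘ g`. -/
noncomputable def cR {k M : Type*} [Field k] [AddCommGroup M] [Module k M]
    (f g : M →ₗ[k] M ⊗[k] M) : M →ₗ[k] M ⊗[k] (M ⊗[k] M) :=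
  (TensorProduct.map LinearMap.id f) ∘ₗ g

section SelfEntanglement

variable (k C : Type*) [Field k] [AddCommGroup C] [Module k C]

/-- `D = C₁ ⊕ C₂` with `C₁` the first copy of `C` (inclusion `inl`) and `C₂ = Φ(C₁)`
the second copy, the channel map `Φ` being the identification `inr`; `Δ*` is `Δ₁` on
`C₁` and `Δ₂ = (Φ ⊗ Φ)Δ₁Φ⁻¹` on `C₂`. -/
noncomputable def Δstar (Δ : C →ₗ[k] C ⊗[k] C) :
    (C × C) →ₗ[k] (C × C) ⊗[k] (C × C) :=
  LinearMap.coprod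
    ((TensorProduct.map (LinearMap.inl k C C) (LinearMap.inl k C C)) ∘ₗ Δ)
    ((TensorProduct.map (LinearMap.inr k C C) (LinearMap.inr k C C)) ∘ₗ Δ)

/-- The bridge `δ₁`: equal to `Δ₁` on `C₁`, with `δ₁ ∘ Φ = (id ⊗ Φ)Δ₁` on `C₂`. -/
noncomputable def δone (Δ : C →ₗ[k] C ⊗[k] C) :
    (C × C) →ₗ[k] (C × C) ⊗[k] (C × C) :=
  LinearMap.coprod
    ((TensorProduct.map (LinearMap.inl k C C) (LinearMap.inl k C C)) ∘ₗ Δ)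
    ((TensorProduct.map (LinearMap.inl k C C) (LinearMap.inr k C C)) ∘ₗ Δ)

/-- The bridge `δ̂₁`: equal to `Δ₁` on `C₁`, with `δ̂₁ ∘ Φ = (Φ ⊗ id)Δ₁` on `C₂`. -/
noncomputable def δhatone (Δ : C →ₗ[k] C ⊗[k] C) :
    (C × C) →ₗ[k] (C × C) ⊗[k] (C × C) :=
  LinearMap.coprod
    ((TensorProduct.map (LinearMap.inl k C C) (LinearMap.inl k C C)) ∘ₗ Δ)
    ((TensorProduct.map (LinearMap.inr k C C) (LinearMap.inl k C C)) ∘ₗ Δ)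

end SelfEntanglement

section Aux
variable {k C : Type*} [Field k] [AddCommGroup C] [Module k C]

lemma assoc_nat (x y z : C →ₗ[k] C × C) :
    (TensorProduct.assoc k (C × C) (C × C) (C × C)).toLinearMap ∘ₗ
      TensorProduct.map (TensorProduct.map x y) z
      = TensorProduct.map x (TensorProduct.map y z) ∘ₗ
        (TensorProduct.assoc k C C C).toLinearMap := by
  apply TensorProduct.ext_threefold
  intro a b c
  simp

lemma lemL (Δ : C →ₗ[k] C ⊗[k] C) (hΔ : cL Δ Δ = cR Δ Δ) (x y z : C →ₗ[k] C × C) :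
    (TensorProduct.assoc k (C × C) (C × C) (C × C)).toLinearMap ∘ₗ
      TensorProduct.map (TensorProduct.map x y ∘ₗ Δ) z ∘ₗ Δ
      = TensorProduct.map x (TensorProduct.map y z) ∘ₗ
        TensorProduct.map LinearMap.id Δ ∘ₗ Δ := by
  have h1 : TensorProduct.map (TensorProduct.map x y ∘ₗ Δ) z
      = TensorProduct.map (TensorProduct.map x y) z ∘ₗ TensorProduct.map Δ LinearMap.id := by
    rw [← TensorProduct.map_comp]; simp
  have key : TensorProduct.map x (TensorProduct.map y z) ∘ₗ cL Δ Δ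
      = TensorProduct.map x (TensorProduct.map y z) ∘ₗ cR Δ Δ := by rw [hΔ]
  simp only [cL, cR, ← LinearMap.comp_assoc] at key
  calc (TensorProduct.assoc k (C × C) (C × C) (C × C)).toLinearMap ∘ₗ
      TensorProduct.map (TensorProduct.map x y ∘ₗ Δ) z ∘ₗ Δ
      = (((TensorProduct.map x (TensorProduct.map y z) ∘ₗ
          (TensorProduct.assoc k C C C).toLinearMap) ∘ₗ
          TensorProduct.map Δ LinearMap.id) ∘ₗ Δ) := by
        rw [h1, ← LinearMap.comp_assoc, ← LinearMap.comp_assoc, assoc_nat]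
    _ = TensorProduct.map x (TensorProduct.map y z) ∘ₗ
        TensorProduct.map LinearMap.id Δ ∘ₗ Δ := by
        rw [key]; simp [LinearMap.comp_assoc]

lemma lemL' (Δ : C →ₗ[k] C ⊗[k] C) (hΔ : cL Δ Δ = cR Δ Δ)
    (F : C × C →ₗ[k] (C × C) ⊗[k] (C × C)) (a b x y : C →ₗ[k] C × C)
    (hF : F ∘ₗ a = TensorProduct.map x y ∘ₗ Δ) :
    (TensorProduct.assoc k (C × C) (C × C) (C × C)).toLinearMap ∘ₗ
      TensorProduct.map F LinearMap.id ∘ₗ TensorProduct.map a b ∘ₗ Δ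
      = TensorProduct.map x (TensorProduct.map y b) ∘ₗ
        TensorProduct.map LinearMap.id Δ ∘ₗ Δ := by
  have h2 : TensorProduct.map F LinearMap.id ∘ₗ TensorProduct.map a b
      = TensorProduct.map (TensorProduct.map x y ∘ₗ Δ) b := by
    rw [← TensorProduct.map_comp, hF]; simp
  rw [show TensorProduct.map F LinearMap.id ∘ₗ TensorProduct.map a b ∘ₗ Δ
      = (TensorProduct.map F LinearMap.id ∘ₗ TensorProduct.map a b) ∘ₗ Δ from
        (LinearMap.comp_assoc _ _ _).symm, h2, lemL Δ hΔ x y b]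

lemma lemR (f : C →ₗ[k] C ⊗[k] C) (F : C × C →ₗ[k] (C × C) ⊗[k] (C × C))
    (x w y z : C →ₗ[k] C × C) (hF : F ∘ₗ w = TensorProduct.map y z ∘ₗ f) :
    TensorProduct.map LinearMap.id F ∘ₗ TensorProduct.map x w ∘ₗ f
      = TensorProduct.map x (TensorProduct.map y z) ∘ₗ
        TensorProduct.map LinearMap.id f ∘ₗ f := by
  rw [← LinearMap.comp_assoc, ← TensorProduct.map_comp, LinearMap.id_comp, hF,
    show TensorProduct.map x (TensorProduct.map y z ∘ₗ f)
      = TensorProduct.map x (TensorProduct.map y z) ∘ₗ TensorProduct.map LinearMap.id f from by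
        rw [← TensorProduct.map_comp]; simp,
    LinearMap.comp_assoc]
end Aux


/-- `(D, Δ*, δ₁, δ̂₁)` from the self-entanglement construction is a
pre-dendriform coalgebra: `Δ*` is coassociative, `(Δ* ⊗ id)δ₁ = (id ⊗ δ₁)δ₁`,
`(id ⊗ Δ*)δ̂₁ = (δ̂₁ ⊗ id)δ̂₁` and `(id ⊗ δ̂₁)δ₁ = (δ₁ ⊗ id)δ̂₁`. -/
theorem self_entanglement_pre_dendriform {k C : Type*} [Field k] [AddCommGroup C] [Module k C]
    (Δ : C →ₗ[k] C ⊗[k] C) (hΔ : cL Δ Δ = cR Δ Δ) :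
    cL (Δstar k C Δ) (Δstar k C Δ) = cR (Δstar k C Δ) (Δstar k C Δ) ∧
    cL (Δstar k C Δ) (δone k C Δ) = cR (δone k C Δ) (δone k C Δ) ∧
    cR (Δstar k C Δ) (δhatone k C Δ) = cL (δhatone k C Δ) (δhatone k C Δ) ∧
    cR (δhatone k C Δ) (δone k C Δ) = cL (δone k C Δ) (δhatone k C Δ) := by
  set i1 := LinearMap.inl k C C with hi1
  set i2 := LinearMap.inr k C C with hi2
  have s1 : Δstar k C Δ ∘ₗ i1 = TensorProduct.map i1 i1 ∘ₗ Δ := LinearMap.coprod_inl _ _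
  have s2 : Δstar k C Δ ∘ₗ i2 = TensorProduct.map i2 i2 ∘ₗ Δ := LinearMap.coprod_inr _ _
  have d1 : δone k C Δ ∘ₗ i1 = TensorProduct.map i1 i1 ∘ₗ Δ := LinearMap.coprod_inl _ _
  have d2 : δone k C Δ ∘ₗ i2 = TensorProduct.map i1 i2 ∘ₗ Δ := LinearMap.coprod_inr _ _
  have e1 : δhatone k C Δ ∘ₗ i1 = TensorProduct.map i1 i1 ∘ₗ Δ := LinearMap.coprod_inl _ _
  have e2 : δhatone k C Δ ∘ₗ i2 = TensorProduct.map i2 i1 ∘ₗ Δ := LinearMap.coprod_inr _ _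
  refine ⟨?_, ?_, ?_, ?_⟩
  · apply LinearMap.prod_ext
    · simp only [cL, cR, LinearMap.comp_assoc, ← hi1, ← hi2, s1]
      rw [lemL' Δ hΔ _ i1 i1 i1 i1 s1, lemR Δ _ i1 i1 i1 i1 s1]
    · simp only [cL, cR, LinearMap.comp_assoc, ← hi1, ← hi2, s2]
      rw [lemL' Δ hΔ _ i2 i2 i2 i2 s2, lemR Δ _ i2 i2 i2 i2 s2]
  · apply LinearMap.prod_ext
    · simp only [cL, cR, LinearMap.comp_assoc, ← hi1, ← hi2, d1]
      rw [lemL' Δ hΔ _ i1 i1 i1 i1 s1, lemR Δ _ i1 i1 i1 i1 d1]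
    · simp only [cL, cR, LinearMap.comp_assoc, ← hi1, ← hi2, d2]
      rw [lemL' Δ hΔ _ i1 i2 i1 i1 s1, lemR Δ _ i1 i2 i1 i2 d2]
  · apply LinearMap.prod_ext
    · simp only [cL, cR, LinearMap.comp_assoc, ← hi1, ← hi2, e1]
      rw [lemL' Δ hΔ _ i1 i1 i1 i1 e1, lemR Δ _ i1 i1 i1 i1 s1]
    · simp only [cL, cR, LinearMap.comp_assoc, ← hi1, ← hi2, e2]
      rw [lemL' Δ hΔ _ i2 i1 i2 i1 e2, lemR Δ _ i2 i1 i1 i1 s1]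
  · apply LinearMap.prod_ext
    · simp only [cL, cR, LinearMap.comp_assoc, ← hi1, ← hi2, d1, e1]
      rw [lemL' Δ hΔ _ i1 i1 i1 i1 d1, lemR Δ _ i1 i1 i1 i1 e1]
    · simp only [cL, cR, LinearMap.comp_assoc, ← hi1, ← hi2, d2, e2]
      rw [lemL' Δ hΔ _ i2 i1 i1 i2 d2, lemR Δ _ i1 i2 i2 i1 e2]
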